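/- Let 0 → A →f B →g C → 0 be a short exact sequence of complexes which is degreewise split, with R-linear sections σ : C^n → B^n satisfying g∘σ = id. Define ι′ : C^n → s(f)[1]^n = A^{n+1} ⊕ B^n by ι′(c) = (a_c, σ(c)), where a_c ∈ A^{n+1} is the unique element with f(a_c) = d(σ(c)) − σ(d c). Then ι′ : C → s(f)[1] is a morphism of complexes, the map π : s(f)[1] → C given by π(a,b) = g(b) satisfies π∘ι′ = Id_C, and ι′∘π is chain homotopic to the identity of s(f)[1], i.e., there exist R-linear maps H : s(f)[1]^n → s(f)[1]^{n-1} with ι′∘π − Id = d∘H + H∘d. -/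
import Mathlib


noncomputable section

universe u v

/-- A cochain complex of `R`-modules indexed by `ℤ`, with differential of degree `+1`. -/
structure Cplx (R : Type u) [CommRing R] where
  /-- the degree `n` part -/
  X : ℤ → Type v
  [grp : ∀ n, AddCommGroup (X n)]
  [mod : ∀ n, Module R (X n)]
  /-- the differential -/
  d : ∀ n, X n →ₗ[R] X (n + 1)
  dd : ∀ n x, d (n + 1) (d n x) = 0

attribute [instance] Cplx.grp Cplx.mod

variable {R : Type u} [CommRing R]

/-- Transport along an equality of degrees. -/
def Cplx.cE (A : Cplx R) : ∀ {i j : ℤ}, i = j → (A.X i →ₗ[R] A.X j)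
  | _, _, rfl => LinearMap.id

/-- Morphisms of complexes, i.e. `R`-linear chain maps. -/
structure Hom (A B : Cplx R) where
  /-- the components -/
  f : ∀ n, A.X n →ₗ[R] B.X n
  comm : ∀ n x, f (n + 1) (A.d n x) = B.d n (f n x)

/-- Let `0 → A → B → C → 0` be a degreewise split short exact sequence of
complexes, with sections `σ` of `g`.  Let `aσ n c` be the element of `A^{n+1}` determined by
`f(aσ n c) = d(σ c) - σ(d c)`.  Then `ι′(c) = (aσ c, σ c)` defines a morphism of complexes
`C → s(f)[1]` (where `s(f)[1]^n = A^{n+1} ⊕ B^n` with differential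
`d(a,b) = (-d a, d b - f a)`), it satisfies `π ∘ ι′ = Id` for `π(a,b) = g(b)`, and
`ι′ ∘ π` is chain homotopic to the identity of `s(f)[1]`. -/
theorem statement1 {A B C : Cplx R} (f : Hom A B) (g : Hom B C)
    (hinj : ∀ n, Function.Injective (f.f n))
    (hsurj : ∀ n, Function.Surjective (g.f n))
    (hexact : ∀ n, LinearMap.range (f.f n) = LinearMap.ker (g.f n))
    (σ : ∀ n, C.X n →ₗ[R] B.X n)
    (hσ : ∀ n c, g.f n (σ n c) = c)
    (aσ : ∀ n, C.X n → A.X (n + 1))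
    (haσ : ∀ n c, f.f (n + 1) (aσ n c) = B.d n (σ n c) - σ (n + 1) (C.d n c)) :
    -- ι′ is a morphism of complexes: R-linearity ...
    (∀ n (c₁ c₂ : C.X n), aσ n (c₁ + c₂) = aσ n c₁ + aσ n c₂) ∧
    (∀ n (r : R) (c : C.X n), aσ n (r • c) = r • aσ n c) ∧
    -- ... and compatibility with the differentials
    (∀ n (c : C.X n), aσ (n + 1) (C.d n c) = -(A.d (n + 1) (aσ n c))) ∧
    (∀ n (c : C.X n), σ (n + 1) (C.d n c) = B.d n (σ n c) - f.f (n + 1) (aσ n c)) ∧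
    -- `π ∘ ι′ = Id`
    (∀ n (c : C.X n), g.f n (σ n c) = c) ∧
    -- `ι′ ∘ π` is homotopic to the identity
    (∃ (H₁ : ∀ n, (A.X (n + 1) × B.X n) →ₗ[R] A.X n)
       (H₂ : ∀ n, (A.X (n + 1) × B.X n) →ₗ[R] B.X (n - 1)),
      ∀ n (a : A.X (n + 1)) (b : B.X n),
        (aσ n (g.f n b) - a =
          -(A.d n (H₁ n (a, b))) +
            H₁ (n + 1) (-(A.d (n + 1) a), B.d n b - f.f (n + 1) a)) ∧
        (σ n (g.f n b) - b =
          B.cE (show n - 1 + 1 = n by omega) (B.d (n - 1) (H₂ n (a, b))) -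
            f.f n (H₁ n (a, b)) +
            B.cE (show n + 1 - 1 = n by omega)
              (H₂ (n + 1) (-(A.d (n + 1) a), B.d n b - f.f (n + 1) a)))) := by
  have key : ∀ n (x : B.X n), g.f n x = 0 → ∃ a, f.f n a = x := by
    intro n x hx
    have : x ∈ LinearMap.ker (g.f n) := hx
    rw [← hexact] at this
    exact this
  have gf0 : ∀ n (a : A.X n), g.f n (f.f n a) = 0 := by
    intro n a
    have : f.f n a ∈ LinearMap.range (f.f n) := ⟨a, rfl⟩
    rw [hexact] at this
    exact this
  have hmem : ∀ n (b : B.X n), ∃ a, f.f n a = b - σ n (g.f n b) := by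
    intro n b
    apply key
    simp [map_sub, hσ]
  set τ0 : ∀ n, B.X n → A.X n := fun n b => (hmem n b).choose with hτ0def
  have hτ0 : ∀ n b, f.f n (τ0 n b) = b - σ n (g.f n b) := fun n b => (hmem n b).choose_spec
  have τadd : ∀ n b₁ b₂, τ0 n (b₁ + b₂) = τ0 n b₁ + τ0 n b₂ := by
    intro n b₁ b₂
    apply hinj n
    simp only [map_add, hτ0]
    abel
  have τsmul : ∀ n (r : R) b, τ0 n (r • b) = r • τ0 n b := by
    intro n r b
    apply hinj n
    simp only [map_smul, hτ0, smul_sub]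
  refine ⟨?_, ?_, ?_, ?_, hσ, ?_⟩
  · intro n c₁ c₂
    apply hinj (n + 1)
    simp only [map_add, haσ]
    abel
  · intro n r c
    apply hinj (n + 1)
    simp only [map_smul, haσ, smul_sub]
  · intro n c
    apply hinj (n + 1 + 1)
    have h1 := haσ (n + 1) (C.d n c)
    have h2 : f.f (n + 1 + 1) (A.d (n + 1) (aσ n c)) = B.d (n + 1) (f.f (n + 1) (aσ n c)) :=
      f.comm (n + 1) (aσ n c)
    rw [map_neg, h1, h2, haσ, map_sub]
    simp [C.dd, B.dd]
  · intro n c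
    have := haσ n c
    rw [this]
    abel
  · refine ⟨fun n => (LinearMap.mk ⟨τ0 n, τadd n⟩ (τsmul n)).comp
        (LinearMap.snd R (A.X (n + 1)) (B.X n)), fun n => 0, ?_⟩
    intro n a b
    simp only [LinearMap.comp_apply, LinearMap.snd_apply, LinearMap.coe_mk, AddHom.coe_mk,
      LinearMap.zero_apply, map_zero, zero_sub, add_zero]
    constructor
    · apply hinj (n + 1)
      simp only [map_add, map_neg, map_sub, haσ, hτ0, f.comm, g.comm, gf0, sub_zero]
      abel
    · rw [hτ0]
      abel
end
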